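/- The decision problem ACCEPTS-DISTINCT-CONJUGATES is decidable: given a deterministic finite automaton M with finite state set over a finite alphabet Σ, it is decidable whether there exist words u, v ∈ Σ* such that uv ∈ L(M), vu ∈ L(M), and uv ≠ vu. -/

import Mathlib

/-- Run a DFA presented by its transition table `T` (the entry `T[q][a]` is the state
reached from state `q` on input letter `a`; out-of-range lookups default to state `0`).
States and letters are natural numbers; only finitely many states are ever reachable. -/
def dfaRun (T : List (List ℕ)) : ℕ → List ℕ → ℕ
  | q, [] => q
  | q, a :: w => dfaRun T ((T.getD q []).getD a 0) w

/-- The DFA with transition table `T`, initial state `q0` and list of accepting states `F`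
accepts the word `w`. -/
def dfaAccepts (T : List (List ℕ)) (q0 : ℕ) (F : List ℕ) (w : List ℕ) : Prop :=
  dfaRun T q0 w ∈ F

namespace ADC

/-! ### Combinatorics of words: powers, Lyndon–Schützenberger, centralizers -/

/-- k-fold repetition of a word -/
def pow (g : List ℕ) : ℕ → List ℕ
  | 0 => []
  | k+1 => g ++ pow g k

lemma pow_add (g : List ℕ) (k l : ℕ) : pow g (k + l) = pow g k ++ pow g l := by
  induction k with
  | zero => simp [pow]
  | succ k ih => rw [Nat.succ_add]; simp [pow, ih]

lemma pow_comm_self (g : List ℕ) (k : ℕ) : g ++ pow g k = pow g k ++ g := by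
  induction k with
  | zero => simp [pow]
  | succ k ih => simp only [pow, ← List.append_assoc, ← ih, List.append_assoc]

lemma pow_succ' (g : List ℕ) (k : ℕ) : pow g (k + 1) = pow g k ++ g := by
  rw [pow, pow_comm_self]

lemma pow_pow_comm (g : List ℕ) (k l : ℕ) : pow g k ++ pow g l = pow g l ++ pow g k := by
  rw [← pow_add, ← pow_add, Nat.add_comm]

lemma length_pow (g : List ℕ) (k : ℕ) : (pow g k).length = k * g.length := by
  induction k with
  | zero => simp [pow]
  | succ k ih => simp [pow, ih, Nat.succ_mul, Nat.add_comm]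

/-- Lyndon–Schützenberger: commuting words are powers of a common word. -/
lemma comm_common_pow : ∀ n (u v : List ℕ), u.length + v.length ≤ n →
    u ++ v = v ++ u → ∃ w k l, u = pow w k ∧ v = pow w l := by
  intro n
  induction n with
  | zero =>
    intro u v h _
    have hu : u = [] := by
      exact List.eq_nil_of_length_eq_zero (by omega)
    have hv : v = [] := by
      exact List.eq_nil_of_length_eq_zero (by omega)
    exact ⟨[], 0, 0, by simp [hu, pow], by simp [hv, pow]⟩
  | succ n ih =>
    have key : ∀ u v : List ℕ, u ≠ [] → u.length + v.length ≤ n + 1 →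
        u ++ v = v ++ u → u.length ≤ v.length →
        ∃ w k l, u = pow w k ∧ v = pow w l := by
      intro u v hu hlen hc hle
      have hpre : u <+: v := by
        have h1 : u = (u ++ v).take u.length := List.take_left.symm
        rw [hc, List.take_append_of_le_length hle] at h1
        rw [h1]; exact List.take_prefix _ _
      obtain ⟨v', rfl⟩ := hpre
      have hc' : u ++ v' = v' ++ u := by
        have : u ++ (u ++ v') = u ++ (v' ++ u) := by
          simpa [List.append_assoc] using hc
        exact List.append_cancel_left this
      have hul : 1 ≤ u.length := by
        cases u with
        | nil => exact absurd rfl hu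
        | cons a t => simp
      obtain ⟨w, k, l, h1, h2⟩ := ih u v' (by simp at hlen ⊢; omega) hc'
      exact ⟨w, k, k + l, h1, by rw [pow_add, h1, h2]⟩
    intro u v hlen hc
    rcases eq_or_ne u [] with rfl | hu
    · exact ⟨v, 0, 1, by simp [pow], by simp [pow]⟩
    rcases eq_or_ne v [] with rfl | hv
    · exact ⟨u, 1, 0, by simp [pow], by simp [pow]⟩
    rcases le_total u.length v.length with hle | hle
    · exact key u v hu hlen hc hle
    · obtain ⟨w, k, l, h1, h2⟩ := key v u hv (by omega) hc.symm hle
      exact ⟨w, l, k, h2, h1⟩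

lemma comm_iff_pow (u v : List ℕ) :
    u ++ v = v ++ u ↔ ∃ w k l, u = pow w k ∧ v = pow w l := by
  constructor
  · exact comm_common_pow (u.length + v.length) u v le_rfl
  · rintro ⟨w, k, l, rfl, rfl⟩; exact pow_pow_comm w k l

lemma pow_nil (k : ℕ) : pow ([] : List ℕ) k = [] := by
  induction k with
  | zero => rfl
  | succ k ih => simp [pow, ih]

lemma pow_prefix_pow (w : List ℕ) {a b : ℕ} (h : a ≤ b) : pow w a <+: pow w b := by
  obtain ⟨c, rfl⟩ := Nat.le.dest h
  rw [pow_add]; exact List.prefix_append _ _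

lemma pow_pow (w : List ℕ) (l a : ℕ) : pow (pow w l) a = pow w (l * a) := by
  induction a with
  | zero => simp [pow]
  | succ a ih => rw [pow, ih, Nat.mul_succ, Nat.add_comm, pow_add]

lemma comm_prefix_pow {x v : List ℕ} (hv : v ≠ []) (h : x ++ v = v ++ x) :
    x <+: pow v x.length := by
  obtain ⟨w, k, l, hx, hvl⟩ := (comm_iff_pow x v).mp h
  have hw : w ≠ [] := by
    rintro rfl; rw [pow_nil] at hvl; exact hv hvl
  have hwl : 1 ≤ w.length := by
    cases w with
    | nil => exact absurd rfl hw
    | cons a t => simp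
  have hl : 1 ≤ l := by
    rcases Nat.eq_zero_or_pos l with rfl | h'
    · exact absurd hvl.symm (by simpa [pow] using hv)
    · exact h'
  have h1 : x <+: pow v k := by
    rw [hvl, pow_pow, hx]
    exact pow_prefix_pow w (Nat.le_mul_of_pos_left k hl)
  refine h1.trans (pow_prefix_pow v ?_)
  rw [hx, length_pow]
  exact Nat.le_mul_of_pos_right k hwl

/-- The centralizer of a nonempty word is generated by a single nonempty word. -/
lemma centralizer_cyclic {v : List ℕ} (hv : v ≠ []) :
    ∃ g : List ℕ, g ≠ [] ∧ g.length ≤ v.length ∧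
      ∀ x, x ++ v = v ++ x ↔ ∃ k, x = pow g k := by
  classical
  have hP : ∃ m, ∃ x : List ℕ, x ≠ [] ∧ x ++ v = v ++ x ∧ x.length = m :=
    ⟨v.length, v, hv, rfl, rfl⟩
  obtain ⟨g, hg, hgc, hglen⟩ := Nat.find_spec hP
  have hmin : ∀ x : List ℕ, x ≠ [] → x ++ v = v ++ x → g.length ≤ x.length := by
    intro x hx hxc
    rw [hglen]
    exact Nat.find_min' hP ⟨x, hx, hxc, rfl⟩
  have hg1 : 1 ≤ g.length := by
    cases g with
    | nil => exact absurd rfl hg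
    | cons a t => simp
  refine ⟨g, hg, hmin v hv rfl, fun x => ⟨?_, ?_⟩⟩
  · have main : ∀ N (x : List ℕ), x.length ≤ N → x ++ v = v ++ x → ∃ k, x = pow g k := by
      intro N
      induction N with
      | zero =>
        intro x hx _
        exact ⟨0, List.eq_nil_of_length_eq_zero (Nat.le_zero.mp hx)⟩
      | succ N ih =>
        intro x hx hxc
        rcases eq_or_ne x [] with rfl | hxe
        · exact ⟨0, rfl⟩
        have hle : g.length ≤ x.length := hmin x hxe hxc
        have hgpre : g <+: x := by
          have h1 : x <+: pow v x.length := comm_prefix_pow hv hxc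
          have h2 : g <+: pow v x.length :=
            (comm_prefix_pow hv hgc).trans (pow_prefix_pow v hle)
          exact List.prefix_of_prefix_length_le h2 h1 hle
        obtain ⟨x', rfl⟩ := hgpre
        have hx'c : x' ++ v = v ++ x' := by
          have : g ++ (x' ++ v) = g ++ (v ++ x') := by
            calc g ++ (x' ++ v) = (g ++ x') ++ v := by rw [List.append_assoc]
            _ = v ++ (g ++ x') := hxc
            _ = (v ++ g) ++ x' := by rw [List.append_assoc]
            _ = (g ++ v) ++ x' := by rw [hgc]
            _ = g ++ (v ++ x') := by rw [List.append_assoc]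
          exact List.append_cancel_left this
        obtain ⟨k, hk⟩ := ih x' (by simp at hx ⊢; omega) hx'c
        exact ⟨k + 1, by rw [pow, ← hk]⟩
    exact fun h => main x.length x le_rfl h
  · rintro ⟨k, rfl⟩
    induction k with
    | zero => simp [pow]
    | succ k ih =>
      calc (g ++ pow g k) ++ v = g ++ (pow g k ++ v) := by rw [List.append_assoc]
      _ = g ++ (v ++ pow g k) := by rw [ih]
      _ = (g ++ v) ++ pow g k := by rw [List.append_assoc]
      _ = (v ++ g) ++ pow g k := by rw [hgc]
      _ = v ++ (g ++ pow g k) := by rw [List.append_assoc]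

/-! ### The DFA as a fold, and the `g*`-tracker automaton -/

/-- single-step transition -/
def dstep (T : List (List ℕ)) (q a : ℕ) : ℕ := (T.getD q []).getD a 0

lemma dfaRun_eq_foldl (T : List (List ℕ)) (w : List ℕ) : ∀ q, dfaRun T q w = w.foldl (dstep T) q := by
  induction w with
  | nil => intro q; rfl
  | cons a w ih => intro q; rw [dfaRun, List.foldl_cons]; exact ih _

lemma dfaRun_append (T : List (List ℕ)) (q : ℕ) (x y : List ℕ) :
    dfaRun T q (x ++ y) = dfaRun T (dfaRun T q x) y := by
  simp [dfaRun_eq_foldl, List.foldl_append]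

/-- tracker automaton for membership in `g*` -/
def gstep (g : List ℕ) (i a : ℕ) : ℕ :=
  if i < g.length ∧ g.getD i 0 = a then (if i + 1 = g.length then 0 else i + 1) else g.length

def gRun (g : List ℕ) (x : List ℕ) : ℕ := x.foldl (gstep g) 0

lemma gstep_le (g : List ℕ) (i a : ℕ) : gstep g i a ≤ g.length := by
  unfold gstep
  split
  · rename_i h; split <;> omega
  · exact le_rfl

/-- invariant: a live tracker state means the word read so far is gᵏ ++ (g.take i) -/
lemma gRun_invariant (g : List ℕ) : ∀ x : List ℕ, gRun g x < g.length →
    ∃ k, x = pow g k ++ g.take (gRun g x) := by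
  intro x
  induction x using List.reverseRecOn with
  | nil => intro _; exact ⟨0, by simp [pow, gRun]⟩
  | append_singleton x a ih =>
    intro hlt
    have hstep : gRun g (x ++ [a]) = gstep g (gRun g x) a := by
      rw [gRun, List.foldl_append]; rfl
    rw [hstep] at hlt ⊢
    by_cases hc : gRun g x < g.length ∧ g.getD (gRun g x) 0 = a
    · obtain ⟨k, hk⟩ := ih hc.1
      have hga : a = g[gRun g x]'hc.1 := by
        exact hc.2.symm.trans (List.getD_eq_getElem g 0 hc.1)
      have htake : g.take (gRun g x) ++ [a] = g.take (gRun g x + 1) := by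
        rw [hga, ← List.take_concat_get hc.1, List.concat_eq_append]
      rw [gstep, if_pos hc] at hlt ⊢
      by_cases h2 : gRun g x + 1 = g.length
      · rw [if_pos h2]
        refine ⟨k + 1, ?_⟩
        rw [hk, List.append_assoc, htake, h2, List.take_length, List.take_zero,
          List.append_nil, pow_succ']
      · rw [if_neg h2]
        refine ⟨k, ?_⟩
        rw [← htake, ← List.append_assoc, ← hk]
    · rw [gstep, if_neg hc] at hlt; omega

lemma gRun_take (g : List ℕ) (hg : g ≠ []) :
    ∀ j, j ≤ g.length → (g.take j).foldl (gstep g) 0 = if j = g.length then 0 else j := by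
  intro j
  induction j with
  | zero =>
    intro _
    have : g.length ≠ 0 := by simpa using List.length_pos_iff.mpr hg |>.ne'
    simp [this.symm]
  | succ j ih =>
    intro hj
    have hjlt : j < g.length := by omega
    have htake : g.take (j + 1) = g.take j ++ [g[j]'hjlt] := by
      rw [← List.take_concat_get hjlt, List.concat_eq_append]
    rw [htake, List.foldl_append, ih (by omega), if_neg (by omega)]
    simp only [List.foldl_cons, List.foldl_nil]
    rw [gstep, if_pos ⟨hjlt, List.getD_eq_getElem g 0 hjlt⟩]

lemma gRun_g (g : List ℕ) (hg : g ≠ []) : gRun g g = 0 := by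
  have := gRun_take g hg g.length le_rfl
  rw [List.take_length, if_pos rfl] at this
  exact this

lemma gRun_pow (g : List ℕ) (hg : g ≠ []) (k : ℕ) : gRun g (pow g k) = 0 := by
  induction k with
  | zero => rfl
  | succ k ih =>
    rw [pow_succ', gRun, List.foldl_append]
    change List.foldl (gstep g) (gRun g (pow g k)) g = 0
    rw [ih]
    exact gRun_g g hg

lemma gRun_zero_iff (g : List ℕ) (hg : g ≠ []) (x : List ℕ) :
    gRun g x = 0 ↔ ∃ k, x = pow g k := by
  constructor
  · intro h
    have hlt : gRun g x < g.length := by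
      rw [h]; exact List.length_pos_iff.mpr hg
    obtain ⟨k, hk⟩ := gRun_invariant g x hlt
    rw [h] at hk
    exact ⟨k, by simpa using hk⟩
  · rintro ⟨k, rfl⟩; exact gRun_pow g hg k

/-! ### The finite state space and the shrink (pumping) lemma -/

/-- the finite set of states relevant to runs of `T` from `q0` -/
def stateSet (T : List (List ℕ)) (q0 : ℕ) : Finset ℕ := (q0 :: 0 :: T.flatten).toFinset

lemma dstep_mem (T : List (List ℕ)) (q0 q a : ℕ) : dstep T q a ∈ stateSet T q0 := by
  unfold dstep stateSet
  rcases Nat.lt_or_ge a (T.getD q []).length with h | h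
  · rw [List.getD_eq_getElem _ 0 h]
    rcases Nat.lt_or_ge q T.length with hq | hq
    · have h1 : T.getD q [] = T[q] := List.getD_eq_getElem T [] hq
      have h2 : (T.getD q [])[a]'h ∈ T.getD q [] := List.getElem_mem h
      have h3 : T.getD q [] ∈ T := h1 ▸ List.getElem_mem hq
      simp only [List.toFinset_cons, Finset.mem_insert, List.mem_toFinset]
      right; right
      exact List.mem_flatten.mpr ⟨T.getD q [], h3, h2⟩
    · have : T.getD q [] = [] := List.getD_eq_default T [] hq
      rw [this] at h; simp at h
  · rw [List.getD_eq_default _ 0 h]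
    simp

lemma stateSet_card_le (T : List (List ℕ)) (q0 : ℕ) :
    (stateSet T q0).card ≤ T.flatten.length + 2 := by
  have := List.toFinset_card_le (q0 :: 0 :: T.flatten)
  simpa [stateSet] using this

lemma q0_mem (T : List (List ℕ)) (q0 : ℕ) : q0 ∈ stateSet T q0 := by
  simp [stateSet]

lemma foldl_dstep_mem (T : List (List ℕ)) (q0 : ℕ) (w : List ℕ) :
    ∀ q ∈ stateSet T q0, w.foldl (dstep T) q ∈ stateSet T q0 := by
  induction w with
  | nil => intro q hq; exact hq
  | cons a w ih => intro q _; exact ih _ (dstep_mem T q0 q a)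

lemma dfaRun_mem (T : List (List ℕ)) (q0 : ℕ) (w : List ℕ) {q : ℕ}
    (hq : q ∈ stateSet T q0) : dfaRun T q w ∈ stateSet T q0 := by
  rw [dfaRun_eq_foldl]
  exact foldl_dstep_mem T q0 w q hq

/-- triple step: two DFA copies plus the `g*` tracker -/
def tstep (T : List (List ℕ)) (g : List ℕ) : ℕ × ℕ × ℕ → ℕ → ℕ × ℕ × ℕ :=
  fun s a => (dstep T s.1 a, dstep T s.2.1 a, gstep g s.2.2 a)

lemma foldl_tstep (T : List (List ℕ)) (g : List ℕ) (w : List ℕ) : ∀ s : ℕ × ℕ × ℕ,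
    w.foldl (tstep T g) s =
      (w.foldl (dstep T) s.1, w.foldl (dstep T) s.2.1, w.foldl (gstep g) s.2.2) := by
  induction w with
  | nil => intro s; rfl
  | cons a w ih => intro s; rw [List.foldl_cons]; exact ih _

/-- the triple state space -/
def tset (T : List (List ℕ)) (q0 : ℕ) (g : List ℕ) : Finset (ℕ × ℕ × ℕ) :=
  stateSet T q0 ×ˢ stateSet T q0 ×ˢ Finset.range (g.length + 1)

lemma tstep_mem (T : List (List ℕ)) (g : List ℕ) (q0 : ℕ) (a : ℕ) :
    ∀ s ∈ tset T q0 g, tstep T g s a ∈ tset T q0 g := by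
  rintro ⟨x, y, z⟩ hs
  simp only [tset, Finset.mem_product, Finset.mem_range] at hs ⊢
  exact ⟨dstep_mem T q0 x a, dstep_mem T q0 y a,
    Nat.lt_succ_of_le (gstep_le g z a)⟩

lemma tset_card_le (T : List (List ℕ)) (q0 : ℕ) (g : List ℕ) :
    (tset T q0 g).card ≤ (T.flatten.length + 2) * (T.flatten.length + 2) * (g.length + 1) := by
  rw [tset, Finset.card_product, Finset.card_product, Finset.card_range, ← Nat.mul_assoc]
  have h := stateSet_card_le T q0
  exact Nat.mul_le_mul (Nat.mul_le_mul h h) le_rfl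

/-- cut out a loop between two repeating prefix states -/
lemma cut {σ : Type} (step : σ → ℕ → σ) (u : List ℕ) (s0 : σ) (i j : ℕ)
    (hij : i < j) (hj : j ≤ u.length)
    (heq : (u.take i).foldl step s0 = (u.take j).foldl step s0) :
    ∃ u' : List ℕ, u'.Sublist u ∧ u'.length + (j - i) = u.length ∧
      u'.foldl step s0 = u.foldl step s0 := by
  set x := u.take i with hx
  set y := (u.drop i).take (j - i) with hy
  set z := u.drop j with hz
  have hxy : x ++ y = u.take j := by
    rw [hx, hy, ← List.take_add]
    congr 1
    omega
  have hu : x ++ (y ++ z) = u := by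
    rw [← List.append_assoc, hxy, hz, List.take_append_drop]
  refine ⟨x ++ z, ?_, ?_, ?_⟩
  · rw [← hu]
    exact (List.sublist_append_right y z).append_left x
  · have hxl : x.length = i := by rw [hx]; simp; omega
    have hzl : z.length = u.length - j := by rw [hz]; simp
    simp only [List.length_append, hxl, hzl]
    omega
  · rw [List.foldl_append, heq, ← hxy, List.foldl_append, ← hu,
      List.foldl_append, List.foldl_append]

/-- generic shrink lemma: any word can be shortened to at most `S.card` letters
while preserving the end state of a run confined to `S`. -/
lemma shrink {σ : Type} [DecidableEq σ] (step : σ → ℕ → σ) (S : Finset σ)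
    (hcl : ∀ a, ∀ s ∈ S, step s a ∈ S) :
    ∀ N (u : List ℕ) (s0 : σ), u.length ≤ N → s0 ∈ S →
      ∃ u' : List ℕ, u'.Sublist u ∧ u'.length ≤ S.card ∧
        u'.foldl step s0 = u.foldl step s0 := by
  intro N
  induction N with
  | zero =>
    intro u s0 hu _
    exact ⟨u, List.Sublist.refl u, by omega, rfl⟩
  | succ N ih =>
    intro u s0 hu hs0
    rcases le_or_gt u.length S.card with h | h
    · exact ⟨u, List.Sublist.refl u, h, rfl⟩
    have hmem : ∀ i ∈ Finset.range (S.card + 1), (u.take i).foldl step s0 ∈ S := by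
      intro i _
      generalize u.take i = w
      clear h hu
      induction w generalizing s0 with
      | nil => exact hs0
      | cons a w ihw => exact ihw _ (hcl a s0 hs0)
    obtain ⟨i, hi, j, hj, hij, heq⟩ :=
      Finset.exists_ne_map_eq_of_card_lt_of_maps_to
        (by rw [Finset.card_range]; omega) hmem
    simp only [Finset.mem_range] at hi hj
    have hcut : ∃ u'' : List ℕ, u''.Sublist u ∧ u''.length < u.length ∧
        u''.foldl step s0 = u.foldl step s0 := by
      rcases Nat.lt_or_ge i j with hlt | hge
      · obtain ⟨u'', h1, h2, h3⟩ := cut step u s0 i j hlt (by omega) heq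
        exact ⟨u'', h1, by omega, h3⟩
      · have hlt : j < i := by omega
        obtain ⟨u'', h1, h2, h3⟩ := cut step u s0 j i hlt (by omega) heq.symm
        exact ⟨u'', h1, by omega, h3⟩
    obtain ⟨u'', h1, h2, h3⟩ := hcut
    obtain ⟨u', g1, g2, g3⟩ := ih u'' s0 (by omega) hs0
    exact ⟨u', g1.trans h1, g2, g3.trans h3⟩

/-- specialized shrink: preserve two DFA runs and a `g*`-tracker run -/
lemma tshrink (T : List (List ℕ)) (g : List ℕ) (q0 q1 q2 : ℕ) (w : List ℕ)
    (h1 : q1 ∈ stateSet T q0) (h2 : q2 ∈ stateSet T q0) :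
    ∃ w' : List ℕ, w'.Sublist w ∧
      w'.length ≤ (T.flatten.length + 2) * (T.flatten.length + 2) * (g.length + 1) ∧
      dfaRun T q1 w' = dfaRun T q1 w ∧ dfaRun T q2 w' = dfaRun T q2 w ∧
      gRun g w' = gRun g w := by
  have hmem : ((q1, q2, 0) : ℕ × ℕ × ℕ) ∈ tset T q0 g := by
    simp only [tset, Finset.mem_product, Finset.mem_range]
    exact ⟨h1, h2, by omega⟩
  obtain ⟨w', hsub, hlen, hfold⟩ :=
    shrink (tstep T g) (tset T q0 g) (fun a s hs => tstep_mem T g q0 a s hs)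
      w.length w (q1, q2, 0) le_rfl hmem
  rw [foldl_tstep, foldl_tstep] at hfold
  have e1 := congrArg Prod.fst hfold
  have e2 := congrArg (fun p => p.2.1) hfold
  have e3 := congrArg (fun p => p.2.2) hfold
  simp only at e1 e2 e3
  refine ⟨w', hsub, hlen.trans (tset_card_le T q0 g), ?_, ?_, ?_⟩
  · rw [dfaRun_eq_foldl, dfaRun_eq_foldl]; exact e1
  · rw [dfaRun_eq_foldl, dfaRun_eq_foldl]; exact e2
  · exact e3


/-! ### The length bound -/

/-- search bound for witnesses -/
def bound (T : List (List ℕ)) : ℕ :=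
  ((T.flatten.length + 2) * (T.flatten.length + 2)) *
      ((T.flatten.length + 2) * (T.flatten.length + 2) + 2) +
    (T.flatten.length + 2) * (T.flatten.length + 2) + 2

/-- main combinatorial lemma: any witness can be shortened to words of length at
most `bound T`, without introducing new letters. -/
lemma bounded_witness {k : ℕ} {T : List (List ℕ)} {q0 : ℕ} {F : List ℕ} {u v : List ℕ}
    (hk : ∀ a ∈ u ++ v, a < k)
    (h1 : dfaRun T q0 (u ++ v) ∈ F) (h2 : dfaRun T q0 (v ++ u) ∈ F)
    (hne : u ++ v ≠ v ++ u) :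
    ∃ u' v' : List ℕ, (∀ a ∈ u' ++ v', a < k) ∧
      dfaRun T q0 (u' ++ v') ∈ F ∧ dfaRun T q0 (v' ++ u') ∈ F ∧
      u' ++ v' ≠ v' ++ u' ∧ u'.length ≤ bound T ∧ v'.length ≤ bound T := by
  set n : ℕ := T.flatten.length + 2 with hn
  set m : ℕ := n * n with hm
  have hku : ∀ a ∈ u, a < k := fun a ha => hk a (List.mem_append_left v ha)
  have hkv : ∀ a ∈ v, a < k := fun a ha => hk a (List.mem_append_right u ha)
  have hu : u ≠ [] := by rintro rfl; exact hne (by simp)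
  have hv : v ≠ [] := by rintro rfl; exact hne (by simp)
  set p := dfaRun T q0 u with hp
  set r := dfaRun T q0 v with hr
  have hpF : dfaRun T p v ∈ F := by rw [hp, ← dfaRun_append]; exact h1
  have hrF : dfaRun T r u ∈ F := by rw [hr, ← dfaRun_append]; exact h2
  have hq0mem : q0 ∈ stateSet T q0 := q0_mem T q0
  have hpmem : p ∈ stateSet T q0 := dfaRun_mem T q0 u hq0mem
  have hrmem : r ∈ stateSet T q0 := dfaRun_mem T q0 v hq0mem
  -- construct a short nonempty u0 with the same pair behaviour as u
  obtain ⟨a, ub, rfl⟩ : ∃ a ub, u = a :: ub := by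
    cases u with
    | nil => exact absurd rfl hu
    | cons a ub => exact ⟨a, ub, rfl⟩
  obtain ⟨b, vb, rfl⟩ : ∃ b vb, v = b :: vb := by
    cases v with
    | nil => exact absurd rfl hv
    | cons b vb => exact ⟨b, vb, rfl⟩
  obtain ⟨ub', hub'sub, hub'len, hub'1, hub'2, -⟩ :=
    tshrink T [] q0 (dstep T q0 a) (dstep T r a) ub (dstep_mem T q0 q0 a) (dstep_mem T q0 r a)
  set u0 : List ℕ := a :: ub' with hu0
  have hu0sub : u0.Sublist (a :: ub) := List.Sublist.cons₂ a hub'sub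
  have hu0len : u0.length ≤ m + 1 := by
    rw [hu0]
    simp only [List.length_cons]
    have h' := hub'len
    simp only [List.length_nil, Nat.zero_add, Nat.mul_one] at h'
    rw [← hn, ← hm] at h'
    omega
  have hu0run : dfaRun T q0 u0 = p := by
    rw [hu0, hp]
    show dfaRun T (dstep T q0 a) ub' = dfaRun T q0 (a :: ub)
    rw [hub'1]; rfl
  have hu0r : dfaRun T r u0 = dfaRun T r (a :: ub) := by
    rw [hu0]
    show dfaRun T (dstep T r a) ub' = dfaRun T r (a :: ub)
    rw [hub'2]; rfl
  obtain ⟨vb', hvb'sub, hvb'len, hvb'1, hvb'2, -⟩ :=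
    tshrink T [] q0 (dstep T q0 b) (dstep T p b) vb (dstep_mem T q0 q0 b) (dstep_mem T q0 p b)
  set v0 : List ℕ := b :: vb' with hv0
  have hv0sub : v0.Sublist (b :: vb) := List.Sublist.cons₂ b hvb'sub
  have hv0len : v0.length ≤ m + 1 := by
    rw [hv0]
    simp only [List.length_cons]
    have h' := hvb'len
    simp only [List.length_nil, Nat.zero_add, Nat.mul_one] at h'
    rw [← hn, ← hm] at h'
    omega
  have hv0run : dfaRun T q0 v0 = r := by
    rw [hv0, hr]
    show dfaRun T (dstep T q0 b) vb' = dfaRun T q0 (b :: vb)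
    rw [hvb'1]; rfl
  have hv0p : dfaRun T p v0 = dfaRun T p (b :: vb) := by
    rw [hv0]
    show dfaRun T (dstep T p b) vb' = dfaRun T p (b :: vb)
    rw [hvb'2]; rfl
  have hu0ne : u0 ≠ [] := by simp [hu0]
  have hv0ne : v0 ≠ [] := by simp [hv0]
  have hku0 : ∀ x ∈ u0, x < k := fun x hx => hku x (hu0sub.subset hx)
  have hkv0 : ∀ x ∈ v0, x < k := fun x hx => hkv x (hv0sub.subset hx)
  have hmb : m + 1 ≤ bound T := by
    have : bound T = m * (m + 2) + m + 2 := by rw [bound, ← hn, ← hm]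
    rw [this]
    have : 0 ≤ m * (m + 2) := Nat.zero_le _
    omega
  -- acceptance facts for any words with the right endpoint behaviour
  have acc1 : ∀ x y : List ℕ, dfaRun T q0 x = p → dfaRun T p y ∈ F →
      dfaRun T q0 (x ++ y) ∈ F := by
    intro x y hx hy; rw [dfaRun_append, hx]; exact hy
  have acc2 : ∀ x y : List ℕ, dfaRun T q0 x = r → dfaRun T r y ∈ F →
      dfaRun T q0 (x ++ y) ∈ F := by
    intro x y hx hy; rw [dfaRun_append, hx]; exact hy
  by_cases hA : u0 ++ v0 = v0 ++ u0
  case neg =>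
    refine ⟨u0, v0, ?_, ?_, ?_, hA, hu0len.trans hmb, hv0len.trans hmb⟩
    · intro x hx
      rcases List.mem_append.mp hx with h | h
      exacts [hku0 x h, hkv0 x h]
    · exact acc1 u0 v0 hu0run (hv0p ▸ hpF)
    · exact acc2 v0 u0 hv0run (hu0r ▸ hrF)
  case pos =>
  by_cases hB : (a :: ub) ++ v0 = v0 ++ (a :: ub)
  case neg =>
    -- u does not commute with v0 ; shrink u with a tracker for the centralizer of v0
    obtain ⟨g, hgne, hglen, hgiff⟩ := centralizer_cyclic hv0ne
    have hgrun : gRun g (a :: ub) ≠ 0 := by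
      intro h0
      exact hB ((hgiff (a :: ub)).mpr ((gRun_zero_iff g hgne _).mp h0))
    obtain ⟨u', hu'sub, hu'len, hu'1, hu'2, hu'3⟩ :=
      tshrink T g q0 q0 r (a :: ub) hq0mem hrmem
    have hu'run : dfaRun T q0 u' = p := by rw [hu'1, hp]
    have hu'ne : u' ++ v0 ≠ v0 ++ u' := by
      intro hcomm
      obtain ⟨kk, hkk⟩ := (hgiff u').mp hcomm
      have : gRun g u' = 0 := (gRun_zero_iff g hgne u').mpr ⟨kk, hkk⟩
      rw [hu'3] at this
      exact hgrun this
    have hu'bound : u'.length ≤ bound T := by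
      have h1 : g.length + 1 ≤ m + 2 := by
        have := hglen.trans hv0len
        omega
      have h2 : m * (g.length + 1) ≤ m * (m + 2) := Nat.mul_le_mul_left m h1
      have h3 : bound T = m * (m + 2) + m + 2 := by rw [bound, ← hn, ← hm]
      rw [← hm] at hu'len
      omega
    refine ⟨u', v0, ?_, ?_, ?_, hu'ne, hu'bound, hv0len.trans hmb⟩
    · intro x hx
      rcases List.mem_append.mp hx with h | h
      exacts [hku x (hu'sub.subset h), hkv0 x h]
    · exact acc1 u' v0 hu'run (hv0p ▸ hpF)
    · exact acc2 v0 u' hv0run (hu'2 ▸ hrF)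
  case pos =>
  by_cases hC : (b :: vb) ++ u0 = u0 ++ (b :: vb)
  case neg =>
    -- v does not commute with u0
    obtain ⟨g, hgne, hglen, hgiff⟩ := centralizer_cyclic hu0ne
    have hgrun : gRun g (b :: vb) ≠ 0 := by
      intro h0
      exact hC ((hgiff (b :: vb)).mpr ((gRun_zero_iff g hgne _).mp h0))
    obtain ⟨v', hv'sub, hv'len, hv'1, hv'2, hv'3⟩ :=
      tshrink T g q0 q0 p (b :: vb) hq0mem hpmem
    have hv'run : dfaRun T q0 v' = r := by rw [hv'1, hr]
    have hv'ne : u0 ++ v' ≠ v' ++ u0 := by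
      intro hcomm
      obtain ⟨kk, hkk⟩ := (hgiff v').mp hcomm.symm
      have : gRun g v' = 0 := (gRun_zero_iff g hgne v').mpr ⟨kk, hkk⟩
      rw [hv'3] at this
      exact hgrun this
    have hv'bound : v'.length ≤ bound T := by
      have h1 : g.length + 1 ≤ m + 2 := by
        have := hglen.trans hu0len
        omega
      have h2 : m * (g.length + 1) ≤ m * (m + 2) := Nat.mul_le_mul_left m h1
      have h3 : bound T = m * (m + 2) + m + 2 := by rw [bound, ← hn, ← hm]
      rw [← hm] at hv'len
      omega
    refine ⟨u0, v', ?_, ?_, ?_, hv'ne, hu0len.trans hmb, hv'bound⟩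
    · intro x hx
      rcases List.mem_append.mp hx with h | h
      exacts [hku0 x h, hkv x (hv'sub.subset h)]
    · exact acc1 u0 v' hu0run (hv'2 ▸ hpF)
    · exact acc2 v' u0 hv'run (hu0r ▸ hrF)
  case pos =>
    -- everything commutes: contradiction with hne
    exfalso
    obtain ⟨g, hgne, -, hgiff⟩ := centralizer_cyclic hv0ne
    obtain ⟨i, hi⟩ := (hgiff (a :: ub)).mp hB
    obtain ⟨j, hj⟩ := (hgiff u0).mp hA
    have huu0 : (a :: ub) ++ u0 = u0 ++ (a :: ub) := by
      rw [hi, hj]; exact pow_pow_comm g i j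
    obtain ⟨h, hhne, -, hhiff⟩ := centralizer_cyclic hu0ne
    obtain ⟨c, hc⟩ := (hhiff (a :: ub)).mp huu0
    obtain ⟨d, hd⟩ := (hhiff (b :: vb)).mp hC
    exact hne (by rw [hc, hd]; exact pow_pow_comm h c d)


/-! ### The decision procedure -/

/-- boolean list membership via a fold -/
def memB (F : List ℕ) (x : ℕ) : Bool := F.foldl (fun b y => b || decide (y = x)) false

lemma foldl_or {α : Type} (p : α → Bool) :
    ∀ (l : List α) (b : Bool), l.foldl (fun b a => b || p a) b = (b || l.any p) := by
  intro l
  induction l with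
  | nil => intro b; simp
  | cons a l ih => intro b; simp [ih, Bool.or_assoc]

lemma memB_iff (F : List ℕ) (x : ℕ) : memB F x = true ↔ x ∈ F := by
  rw [memB, foldl_or]
  simp

/-- all words over `{0,…,k-1}` of length at most `B` -/
def wordsUpTo (k : ℕ) : ℕ → List (List ℕ)
  | 0 => [[]]
  | B+1 => [] :: (List.range k).flatMap fun a => (wordsUpTo k B).map (a :: ·)

lemma mem_wordsUpTo (k : ℕ) : ∀ (B : ℕ) (w : List ℕ),
    w ∈ wordsUpTo k B ↔ w.length ≤ B ∧ ∀ a ∈ w, a < k := by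
  intro B
  induction B with
  | zero =>
    intro w
    constructor
    · intro hw
      simp only [wordsUpTo, List.mem_singleton] at hw
      subst hw; simp
    · rintro ⟨h1, -⟩
      have : w = [] := List.eq_nil_of_length_eq_zero (by omega)
      simp [wordsUpTo, this]
  | succ B ih =>
    intro w
    constructor
    · intro hw
      simp only [wordsUpTo, List.mem_cons, List.mem_flatMap, List.mem_map,
        List.mem_range] at hw
      rcases hw with rfl | ⟨x, hx, w', hw', rfl⟩
      · simp
      · obtain ⟨h1, h2⟩ := (ih w').mp hw'
        refine ⟨by simp; omega, ?_⟩
        intro c hc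
        rcases List.mem_cons.mp hc with rfl | hc
        exacts [hx, h2 c hc]
    · rintro ⟨h1, h2⟩
      cases w with
      | nil => simp [wordsUpTo]
      | cons c w' =>
        simp only [wordsUpTo, List.mem_cons, List.mem_flatMap, List.mem_map,
          List.mem_range]
        right
        refine ⟨c, h2 c List.mem_cons_self, w', (ih w').mpr ⟨?_, ?_⟩, rfl⟩
        · simp at h1; omega
        · exact fun a ha => h2 a (List.mem_cons_of_mem c ha)

/-- boolean acceptance check for a candidate pair -/
def checkB (T : List (List ℕ)) (q0 : ℕ) (F : List ℕ) (u v : List ℕ) : Bool :=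
  (memB F ((u ++ v).foldl (dstep T) q0) && memB F ((v ++ u).foldl (dstep T) q0)) &&
    !(decide (u ++ v = v ++ u))

lemma checkB_iff (T : List (List ℕ)) (q0 : ℕ) (F : List ℕ) (u v : List ℕ) :
    checkB T q0 F u v = true ↔
      dfaRun T q0 (u ++ v) ∈ F ∧ dfaRun T q0 (v ++ u) ∈ F ∧ u ++ v ≠ v ++ u := by
  rw [checkB]
  simp only [Bool.and_eq_true, Bool.not_eq_true', decide_eq_false_iff_not, memB_iff,
    dfaRun_eq_foldl]
  tauto

/-- the decision procedure -/
def decider (x : ℕ × List (List ℕ) × ℕ × List ℕ) : Bool :=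
  ((wordsUpTo x.1 (bound x.2.1)).flatMap fun u =>
      (wordsUpTo x.1 (bound x.2.1)).map fun v => (u, v)).foldl
    (fun b uv => b || checkB x.2.1 x.2.2.1 x.2.2.2 uv.1 uv.2) false

lemma decider_iff (k : ℕ) (T : List (List ℕ)) (q0 : ℕ) (F : List ℕ) :
    decider (k, T, q0, F) = true ↔
      ∃ u v : List ℕ, u ∈ wordsUpTo k (bound T) ∧ v ∈ wordsUpTo k (bound T) ∧
        checkB T q0 F u v = true := by
  rw [decider, foldl_or]
  simp only [Bool.false_or, List.any_eq_true, List.mem_flatMap, List.mem_map]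
  constructor
  · rintro ⟨uv, ⟨u, hu, v, hv, rfl⟩, hc⟩
    exact ⟨u, v, hu, hv, hc⟩
  · rintro ⟨u, v, hu, hv, hc⟩
    exact ⟨(u, v), ⟨u, hu, v, hv, rfl⟩, hc⟩

/-! ### Computability of the decision procedure -/

lemma primrec_wordsUpTo : Primrec fun p : ℕ × ℕ => wordsUpTo p.1 p.2 := by
  have hbody : Primrec₂ fun (a : ℕ × ℕ) (q : ℕ × List (List ℕ)) =>
      ([] : List ℕ) :: (List.range a.1).flatMap fun x => q.2.map (x :: ·) := by
    have hinner : Primrec₂ fun (r : (ℕ × ℕ) × ℕ × List (List ℕ)) (x : ℕ) =>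
        r.2.2.map (x :: ·) :=
      Primrec.to₂ (Primrec.list_map
        (Primrec.snd.comp (Primrec.snd.comp Primrec.fst))
        (Primrec.to₂ (Primrec.list_cons.comp (Primrec.snd.comp Primrec.fst) Primrec.snd)))
    exact Primrec.to₂ (Primrec.list_cons.comp (Primrec.const ([] : List ℕ))
      (Primrec.list_flatMap
        (Primrec.list_range.comp (Primrec.fst.comp Primrec.fst)) hinner))
  have h := Primrec.nat_rec' (f := fun p : ℕ × ℕ => p.2)
    (g := fun _ : ℕ × ℕ => ([[]] : List (List ℕ))) Primrec.snd (Primrec.const _) hbody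
  apply h.of_eq
  rintro ⟨k0, B⟩
  simp only
  induction B with
  | zero => rfl
  | succ B ih => rw [wordsUpTo, ← ih]

abbrev In := ℕ × List (List ℕ) × ℕ × List ℕ
abbrev Ctx := In × (List ℕ × List ℕ)

set_option maxHeartbeats 2000000 in
lemma hcheck : Primrec fun c : Ctx => checkB c.1.2.1 c.1.2.2.1 c.1.2.2.2 c.2.1 c.2.2 := by
  have hTc : Primrec fun c : Ctx => c.1.2.1 :=
    (Primrec.fst.comp Primrec.snd).comp Primrec.fst
  have hq0c : Primrec fun c : Ctx => c.1.2.2.1 :=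
    (Primrec.fst.comp (Primrec.snd.comp Primrec.snd)).comp Primrec.fst
  have hFc : Primrec fun c : Ctx => c.1.2.2.2 :=
    (Primrec.snd.comp (Primrec.snd.comp Primrec.snd)).comp Primrec.fst
  have huv : Primrec fun c : Ctx => c.2.1 ++ c.2.2 :=
    Primrec.list_append.comp (Primrec.fst.comp Primrec.snd)
      (Primrec.snd.comp Primrec.snd)
  have hvu : Primrec fun c : Ctx => c.2.2 ++ c.2.1 :=
    Primrec.list_append.comp (Primrec.snd.comp Primrec.snd)
      (Primrec.fst.comp Primrec.snd)
  have hdstep : Primrec₂ fun (c : Ctx) (p : ℕ × ℕ) => dstep c.1.2.1 p.1 p.2 :=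
    Primrec.to₂ ((Primrec.list_getD 0).comp
      ((Primrec.list_getD ([] : List ℕ)).comp (hTc.comp Primrec.fst)
        (Primrec.fst.comp Primrec.snd))
      (Primrec.snd.comp Primrec.snd))
  have hrun1 : Primrec fun c : Ctx => (c.2.1 ++ c.2.2).foldl (dstep c.1.2.1) c.1.2.2.1 :=
    (Primrec.list_foldl huv hq0c hdstep).of_eq (fun c => by rfl)
  have hrun2 : Primrec fun c : Ctx => (c.2.2 ++ c.2.1).foldl (dstep c.1.2.1) c.1.2.2.1 :=
    (Primrec.list_foldl hvu hq0c hdstep).of_eq (fun c => by rfl)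
  have hmemB : ∀ {y : Ctx → ℕ}, Primrec y → Primrec fun c : Ctx => memB c.1.2.2.2 (y c) := by
    intro y hy
    unfold memB
    exact Primrec.list_foldl hFc (Primrec.const false)
      ((Primrec.or.comp (Primrec.fst.comp Primrec.snd)
        (Primrec.eq.comp (Primrec.snd.comp Primrec.snd) (hy.comp Primrec.fst)).decide).to₂)
  have hne : Primrec fun c : Ctx => !(decide (c.2.1 ++ c.2.2 = c.2.2 ++ c.2.1)) :=
    Primrec.not.comp (Primrec.eq.comp huv hvu).decide
  unfold checkB
  exact Primrec.and.comp (Primrec.and.comp (hmemB hrun1) (hmemB hrun2)) hne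

lemma primrec_decider : Primrec decider := by
  have hk : Primrec fun x : In => x.1 := Primrec.fst
  have hT : Primrec fun x : In => x.2.1 := Primrec.fst.comp Primrec.snd
  have hflen : Primrec fun x : In => x.2.1.flatten.length + 2 :=
    Primrec.nat_add.comp (Primrec.list_length.comp (Primrec.list_flatten.comp hT))
      (Primrec.const 2)
  have hmm : Primrec fun x : In => (x.2.1.flatten.length + 2) * (x.2.1.flatten.length + 2) :=
    Primrec.nat_mul.comp hflen hflen
  have hbound : Primrec fun x : In => bound x.2.1 := by
    unfold bound
    exact Primrec.nat_add.comp
      (Primrec.nat_add.comp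
        (Primrec.nat_mul.comp hmm (Primrec.nat_add.comp hmm (Primrec.const 2))) hmm)
      (Primrec.const 2)
  have hW : Primrec fun x : In => wordsUpTo x.1 (bound x.2.1) :=
    primrec_wordsUpTo.comp (hk.pair hbound)
  have hcand : Primrec fun x : In =>
      (wordsUpTo x.1 (bound x.2.1)).flatMap fun u =>
        (wordsUpTo x.1 (bound x.2.1)).map fun v => (u, v) :=
    Primrec.list_flatMap hW
      (Primrec.to₂ (Primrec.list_map (hW.comp Primrec.fst)
        (Primrec.to₂ ((Primrec.snd.comp Primrec.fst).pair Primrec.snd))))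
  unfold decider
  exact Primrec.list_foldl hcand (Primrec.const false)
    ((Primrec.or.comp (Primrec.fst.comp Primrec.snd)
      (hcheck.comp (Primrec.fst.pair (Primrec.snd.comp Primrec.snd)))).to₂)

end ADC


/-- **ACCEPTS-DISTINCT-CONJUGATES is decidable.**  An instance is an alphabet size `k`
(so `Σ = {0, …, k-1}`) together with a DFA `(T, q0, F)` over `Σ`.  There is a total
computable function deciding whether the DFA accepts two distinct conjugates `uv ≠ vu`. -/
theorem acceptsDistinctConjugates_decidable :
    ∃ f : ℕ × List (List ℕ) × ℕ × List ℕ → Bool, Computable f ∧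
      ∀ (k : ℕ) (T : List (List ℕ)) (q0 : ℕ) (F : List ℕ),
        (f (k, T, q0, F) = true ↔
          ∃ u v : List ℕ, (∀ a ∈ u ++ v, a < k) ∧
            dfaAccepts T q0 F (u ++ v) ∧ dfaAccepts T q0 F (v ++ u) ∧
            u ++ v ≠ v ++ u) := by
  refine ⟨ADC.decider, ADC.primrec_decider.to_comp, ?_⟩
  intro k T q0 F
  rw [ADC.decider_iff]
  constructor
  · rintro ⟨u, v, hu, hv, hc⟩
    obtain ⟨hacc1, hacc2, hne⟩ := (ADC.checkB_iff T q0 F u v).mp hc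
    obtain ⟨-, hku⟩ := (ADC.mem_wordsUpTo k (ADC.bound T) u).mp hu
    obtain ⟨-, hkv⟩ := (ADC.mem_wordsUpTo k (ADC.bound T) v).mp hv
    refine ⟨u, v, ?_, hacc1, hacc2, hne⟩
    intro a ha
    rcases List.mem_append.mp ha with h | h
    exacts [hku a h, hkv a h]
  · rintro ⟨u, v, hk, hacc1, hacc2, hne⟩
    obtain ⟨u', v', hk', h1', h2', hne', hlu, hlv⟩ :=
      ADC.bounded_witness hk hacc1 hacc2 hne
    refine ⟨u', v', ?_, ?_, (ADC.checkB_iff T q0 F u' v').mpr ⟨h1', h2', hne'⟩⟩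
    · exact (ADC.mem_wordsUpTo k (ADC.bound T) u').mpr
        ⟨hlu, fun a ha => hk' a (List.mem_append_left v' ha)⟩
    · exact (ADC.mem_wordsUpTo k (ADC.bound T) v').mpr
        ⟨hlv, fun a ha => hk' a (List.mem_append_right u' ha)⟩
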